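/- Let h > 0 and let F, F' : ℝ → (0, ∞) be measurable with ∫_ℝ F < ∞, and suppose S(ω) = ∑_{k ∈ ℤ} F(ω + k/h) and S'(ω) = ∑_{k ∈ ℤ} F'(ω + k/h) are finite for almost every ω. Define the misspecified frequency-domain error E(F', F) = ∫_ℝ F(ω)·[(1 − F'(ω)/S'(ω))² + ∑_{k ∈ ℤ, k ≠ 0} (F'(ω + k/h)/S'(ω + k/h))²] dω and the optimal error E(F, F) = ∫_ℝ F(ω)·(S(ω) − F(ω))/S(ω) dω. Then E(F', F) ≥ E(F, F). -/

import Mathlib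

open Real MeasureTheory
open scoped ENNReal

/-- The periodization `S(ω) = ∑_{k ∈ ℤ} G(ω + k/h)`. -/
noncomputable def specPer (h : ℝ) (G : ℝ → ℝ) (ω : ℝ) : ℝ :=
  ∑' k : ℤ, G (ω + (k : ℝ) / h)

/-- The normalized weight `G(ω)/S(ω)`. -/
noncomputable def specWt (h : ℝ) (G : ℝ → ℝ) (ω : ℝ) : ℝ :=
  G ω / specPer h G ω

lemma tsum_nonneg_eq_toReal {ι : Type*} [Countable ι] (f : ι → ℝ) (hf : ∀ i, 0 ≤ f i) :
    ∑' i, f i = (∑' i, ENNReal.ofReal (f i)).toReal := by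
  by_cases hs : Summable f
  · rw [← ENNReal.ofReal_tsum_of_nonneg hf hs, ENNReal.toReal_ofReal (tsum_nonneg hf)]
  · rw [tsum_eq_zero_of_not_summable hs]
    have hne : (∑' i, ENNReal.ofReal (f i)) = ∞ := by
      by_contra hne
      apply hs
      have hsum : Summable fun i => Real.toNNReal (f i) :=
        ENNReal.tsum_coe_ne_top_iff_summable.mp (by simpa [ENNReal.ofReal] using hne)
      have h2 := NNReal.summable_coe.mpr hsum
      exact h2.congr fun i => Real.coe_toNNReal _ (hf i)
    simp [hne]

lemma measurable_tsum_nonneg {α : Type*} [MeasurableSpace α] {ι : Type*} [Countable ι]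
    {f : ι → α → ℝ} (hm : ∀ i, Measurable (f i)) (hf : ∀ i x, 0 ≤ f i x) :
    Measurable fun x => ∑' i, f i x := by
  have hrw : (fun x => ∑' i, f i x) = fun x => (∑' i, ENNReal.ofReal (f i x)).toReal := by
    funext x; exact tsum_nonneg_eq_toReal _ fun i => hf i x
  rw [hrw]
  exact (Measurable.ennreal_tsum fun i => (hm i).ennreal_ofReal).ennreal_toReal

lemma key_quadratic (Fω S a : ℝ) (hF : 0 < Fω) (hFS : Fω ≤ S) :
    Fω * (S - Fω) / S ≤ Fω * (1 - a) ^ 2 + (S - Fω) * a ^ 2 := by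
  have hS : 0 < S := hF.trans_le hFS
  rw [div_le_iff₀ hS]
  nlinarith [sq_nonneg (S * a - Fω)]

lemma specPer_shift (h : ℝ) (G : ℝ → ℝ) (ω : ℝ) (k : ℤ) :
    specPer h G (ω + (k : ℝ) / h) = specPer h G ω := by
  unfold specPer
  have h1 : (fun j : ℤ => G (ω + (k : ℝ) / h + (j : ℝ) / h))
      = fun j : ℤ => G (ω + ((k + j : ℤ) : ℝ) / h) := by
    funext j; congr 1; push_cast; ring
  rw [h1]
  exact (Equiv.addLeft k).tsum_eq fun j : ℤ => G (ω + (j : ℝ) / h)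

/-- Negation as a self-equivalence of the nonzero integers. -/
def negNZ : {k : ℤ // k ≠ 0} ≃ {k : ℤ // k ≠ 0} where
  toFun k := ⟨-k.1, neg_ne_zero.mpr k.2⟩
  invFun k := ⟨-k.1, neg_ne_zero.mpr k.2⟩
  left_inv k := by simp
  right_inv k := by simp

@[simp] lemma negNZ_coe (k : {k : ℤ // k ≠ 0}) : ((negNZ k : ℤ) : ℝ) = -((k : ℤ) : ℝ) := by
  simp [negNZ]

lemma tsum_ne_zero_split {f : ℤ → ℝ} (hf : Summable f) :
    f 0 + ∑' k : {k : ℤ // k ≠ 0}, f k = ∑' k, f k := by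
  have h1 := Summable.tsum_subtype_add_tsum_subtype_compl hf ({0} : Set ℤ)
  rw [tsum_singleton] at h1
  rw [← h1]
  congr 1

/-- A misspecified interpolation kernel never beats the optimal one: for `h > 0`,
positive measurable spectral densities `F` (true, integrable) and `F'` (used), with
periodizations `S(ω) = ∑_{k ∈ ℤ} F(ω + k/h)` and `S'(ω) = ∑_{k ∈ ℤ} F'(ω + k/h)`
finite for almost every `ω`, the misspecified frequency-domain error
`E(F', F) = ∫ F(ω)·[(1 − F'(ω)/S'(ω))² + ∑_{k ≠ 0} (F'(ω + k/h)/S'(ω + k/h))²] dω`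
satisfies `E(F', F) ≥ E(F, F) = ∫ F(ω)·(S(ω) − F(ω))/S(ω) dω`. -/
theorem misspecified_error_ge_optimal_error (h : ℝ) (hh : 0 < h) (F F' : ℝ → ℝ)
    (hFmeas : Measurable F) (hF'meas : Measurable F')
    (hFpos : ∀ ω, 0 < F ω) (hF'pos : ∀ ω, 0 < F' ω)
    (hFint : Integrable F)
    (hS : ∀ᵐ ω ∂(volume : Measure ℝ), Summable (fun k : ℤ => F (ω + (k : ℝ) / h)))
    (hS' : ∀ᵐ ω ∂(volume : Measure ℝ), Summable (fun k : ℤ => F' (ω + (k : ℝ) / h))) :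
    (∫ ω : ℝ, F ω *
        ((1 - F' ω / ∑' k : ℤ, F' (ω + (k : ℝ) / h)) ^ 2 +
          ∑' k : {k : ℤ // k ≠ 0},
            (F' (ω + ((k : ℤ) : ℝ) / h) /
              ∑' j : ℤ, F' (ω + ((k : ℤ) : ℝ) / h + (j : ℝ) / h)) ^ 2)) ≥
    ∫ ω : ℝ, F ω * ((∑' k : ℤ, F (ω + (k : ℝ) / h)) - F ω) /
        ∑' k : ℤ, F (ω + (k : ℝ) / h) := by
  classical
  -- notation
  have wt_nonneg : ∀ u, 0 ≤ specWt h F' u := fun u =>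
    div_nonneg (hF'pos u).le (tsum_nonneg fun k => (hF'pos _).le)
  -- the two integrands
  set g1 : ℝ → ℝ := fun ω => F ω *
      ((1 - specWt h F' ω) ^ 2 +
        ∑' k : {k : ℤ // k ≠ 0}, specWt h F' (ω + ((k : ℤ) : ℝ) / h) ^ 2) with hg1
  set g2 : ℝ → ℝ := fun ω => F ω * (specPer h F ω - F ω) / specPer h F ω with hg2
  -- measurability
  have mS : Measurable (specPer h F) :=
    measurable_tsum_nonneg (fun k => hFmeas.comp (measurable_add_const _))
      (fun k ω => (hFpos _).le)
  have mS' : Measurable (specPer h F') :=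
    measurable_tsum_nonneg (fun k => hF'meas.comp (measurable_add_const _))
      (fun k ω => (hF'pos _).le)
  have ma : Measurable (specWt h F') := hF'meas.div mS'
  have maw : ∀ k : ℤ, Measurable fun ω => specWt h F' (ω + (k : ℝ) / h) := fun k =>
    ma.comp (measurable_add_const _)
  have mT : Measurable fun ω =>
      ∑' k : {k : ℤ // k ≠ 0}, specWt h F' (ω + ((k : ℤ) : ℝ) / h) ^ 2 :=
    measurable_tsum_nonneg (fun k => (maw (k : ℤ)).pow_const 2) (fun k ω => sq_nonneg _)
  have mg1 : Measurable g1 := by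
    apply hFmeas.mul
    exact (((measurable_const.sub ma).pow_const 2)).add mT
  have mg2 : Measurable g2 := (hFmeas.mul (mS.sub hFmeas)).div mS
  -- good set facts
  have hgood := hS.and hS'
  -- pointwise facts on the good set
  have haw_eq : ∀ ω, Summable (fun k : ℤ => F' (ω + (k : ℝ) / h)) →
      ∀ k : ℤ, specWt h F' (ω + (k : ℝ) / h) = F' (ω + (k : ℝ) / h) / specPer h F' ω := by
    intro ω h2 k
    unfold specWt
    rw [specPer_shift]
  have hS'pos : ∀ ω, Summable (fun k : ℤ => F' (ω + (k : ℝ) / h)) →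
      0 < specPer h F' ω := by
    intro ω h2
    have h0 : F' ω ≤ specPer h F' ω := by
      have := Summable.le_tsum h2 0 (fun j _ => (hF'pos _).le)
      simpa [specPer] using this
    exact (hF'pos ω).trans_le h0
  have haw_le_one : ∀ ω, Summable (fun k : ℤ => F' (ω + (k : ℝ) / h)) →
      ∀ k : ℤ, specWt h F' (ω + (k : ℝ) / h) ≤ 1 := by
    intro ω h2 k
    rw [haw_eq ω h2 k, div_le_one (hS'pos ω h2)]
    exact Summable.le_tsum h2 k (fun j _ => (hF'pos _).le)
  have hsummable_aw : ∀ ω, Summable (fun k : ℤ => F' (ω + (k : ℝ) / h)) →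
      Summable fun k : ℤ => specWt h F' (ω + (k : ℝ) / h) := by
    intro ω h2
    exact (h2.div_const (specPer h F' ω)).congr fun k => (haw_eq ω h2 k).symm
  have htsum_aw : ∀ ω, Summable (fun k : ℤ => F' (ω + (k : ℝ) / h)) →
      ∑' k : ℤ, specWt h F' (ω + (k : ℝ) / h) = 1 := by
    intro ω h2
    have : ∑' k : ℤ, specWt h F' (ω + (k : ℝ) / h)
        = ∑' k : ℤ, F' (ω + (k : ℝ) / h) / specPer h F' ω := tsum_congr (haw_eq ω h2)
    rw [this, tsum_div_const]
    exact div_self (hS'pos ω h2).ne'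
  have hsummable_awsq : ∀ ω, Summable (fun k : ℤ => F' (ω + (k : ℝ) / h)) →
      Summable fun k : ℤ => specWt h F' (ω + (k : ℝ) / h) ^ 2 := by
    intro ω h2
    refine Summable.of_nonneg_of_le (fun k => sq_nonneg _) (fun k => ?_) (hsummable_aw ω h2)
    have h3 := wt_nonneg (ω + (k : ℝ) / h)
    have h4 := haw_le_one ω h2 k
    nlinarith
  have hT_le_one : ∀ ω, Summable (fun k : ℤ => F' (ω + (k : ℝ) / h)) →
      (∑' k : {k : ℤ // k ≠ 0}, specWt h F' (ω + ((k : ℤ) : ℝ) / h) ^ 2) ≤ 1 := by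
    intro ω h2
    have h3 : (∑' k : {k : ℤ // k ≠ 0}, specWt h F' (ω + ((k : ℤ) : ℝ) / h) ^ 2)
        ≤ ∑' k : {k : ℤ // k ≠ 0}, specWt h F' (ω + ((k : ℤ) : ℝ) / h) := by
      refine Summable.tsum_le_tsum (fun k => ?_) ((hsummable_awsq ω h2).subtype _)
        ((hsummable_aw ω h2).subtype _)
      have h4 := wt_nonneg (ω + ((k : ℤ) : ℝ) / h)
      have h5 := haw_le_one ω h2 (k : ℤ)
      nlinarith
    have h6 := tsum_ne_zero_split (hsummable_aw ω h2)
    have h7 := htsum_aw ω h2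
    have h8 := wt_nonneg (ω + ((0 : ℤ) : ℝ) / h)
    rw [h7] at h6
    linarith
  have hT_nonneg : ∀ ω,
      0 ≤ ∑' k : {k : ℤ // k ≠ 0}, specWt h F' (ω + ((k : ℤ) : ℝ) / h) ^ 2 :=
    fun ω => tsum_nonneg fun k => sq_nonneg _
  have hFleS : ∀ ω, Summable (fun k : ℤ => F (ω + (k : ℝ) / h)) → F ω ≤ specPer h F ω := by
    intro ω h1
    have := Summable.le_tsum h1 0 (fun j _ => (hFpos _).le)
    simpa [specPer] using this
  -- ENNReal-valued pieces
  set eA : ℝ → ℝ≥0∞ := fun ω => ENNReal.ofReal (F ω * (1 - specWt h F' ω) ^ 2) with heA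
  set eq0 : ℝ → ℝ≥0∞ := fun ω => ENNReal.ofReal (specWt h F' ω ^ 2) with heq0
  set φ : {k : ℤ // k ≠ 0} → ℝ → ℝ≥0∞ := fun k ω =>
    ENNReal.ofReal (F ω) * ENNReal.ofReal (specWt h F' (ω + ((k : ℤ) : ℝ) / h) ^ 2) with hφ
  set ψ : {k : ℤ // k ≠ 0} → ℝ → ℝ≥0∞ := fun k ω =>
    ENNReal.ofReal (F (ω - ((k : ℤ) : ℝ) / h)) * eq0 ω with hψ
  have meA : Measurable eA := (hFmeas.mul ((measurable_const.sub ma).pow_const 2)).ennreal_ofReal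
  have meq0 : Measurable eq0 := (ma.pow_const 2).ennreal_ofReal
  have mφ : ∀ k, Measurable (φ k) := fun k =>
    hFmeas.ennreal_ofReal.mul ((maw (k : ℤ)).pow_const 2).ennreal_ofReal
  have mψ : ∀ k, Measurable (ψ k) := fun k =>
    (hFmeas.comp (measurable_id.sub measurable_const)).ennreal_ofReal.mul meq0
  -- translation invariance step
  have step1 : ∀ k : {k : ℤ // k ≠ 0}, (∫⁻ ω, φ k ω) = ∫⁻ ω, ψ k ω := by
    intro k
    have htr := lintegral_add_right_eq_self (μ := (volume : Measure ℝ)) (ψ k) (((k : ℤ) : ℝ) / h)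
    rw [← htr]
    refine lintegral_congr fun ω => ?_
    simp only [hψ, hφ, heq0, add_sub_cancel_right]
  -- Tonelli steps
  have step2 : (∫⁻ ω, ∑' k : {k : ℤ // k ≠ 0}, φ k ω) = ∑' k : {k : ℤ // k ≠ 0}, ∫⁻ ω, φ k ω :=
    lintegral_tsum fun k => (mφ k).aemeasurable
  have step3 : (∑' k : {k : ℤ // k ≠ 0}, ∫⁻ ω, ψ k ω) = ∫⁻ ω, ∑' k : {k : ℤ // k ≠ 0}, ψ k ω :=
    (lintegral_tsum fun k => (mψ k).aemeasurable).symm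
  have step4 : ∀ ω, (∑' k : {k : ℤ // k ≠ 0}, ψ k ω)
      = (∑' k : {k : ℤ // k ≠ 0}, ENNReal.ofReal (F (ω - ((k : ℤ) : ℝ) / h))) * eq0 ω := by
    intro ω
    simp only [hψ]
    exact ENNReal.tsum_mul_right
  -- identification of the shifted sum with S - F, a.e.
  have step5 : ∀ ω, Summable (fun k : ℤ => F (ω + (k : ℝ) / h)) →
      (∑' k : {k : ℤ // k ≠ 0}, ENNReal.ofReal (F (ω - ((k : ℤ) : ℝ) / h)))
        = ENNReal.ofReal (specPer h F ω - F ω) := by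
    intro ω h1
    have hneg : (∑' k : {k : ℤ // k ≠ 0}, ENNReal.ofReal (F (ω - ((k : ℤ) : ℝ) / h)))
        = ∑' k : {k : ℤ // k ≠ 0}, ENNReal.ofReal (F (ω + ((k : ℤ) : ℝ) / h)) := by
      have := negNZ.tsum_eq fun k : {k : ℤ // k ≠ 0} =>
        ENNReal.ofReal (F (ω + ((k : ℤ) : ℝ) / h))
      rw [← this]
      refine tsum_congr fun k => ?_
      have harg : ω + ((negNZ k : ℤ) : ℝ) / h = ω - ((k : ℤ) : ℝ) / h := by
        rw [negNZ_coe]; ring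
      rw [harg]
    rw [hneg]
    have hsub : Summable fun k : {k : ℤ // k ≠ 0} => F (ω + ((k : ℤ) : ℝ) / h) :=
      h1.subtype _
    rw [← ENNReal.ofReal_tsum_of_nonneg (fun k => (hFpos _).le) hsub]
    congr 1
    have h6 := tsum_ne_zero_split h1
    have h7 : F (ω + ((0 : ℤ) : ℝ) / h) = F ω := by norm_num
    rw [h7] at h6
    have : (∑' k : ℤ, F (ω + (k : ℝ) / h)) = specPer h F ω := rfl
    linarith [h6]
  -- a.e. decomposition of ofReal ∘ g1
  have step6 : ∀ᵐ ω ∂(volume : Measure ℝ),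
      ENNReal.ofReal (g1 ω) = eA ω + ∑' k : {k : ℤ // k ≠ 0}, φ k ω := by
    filter_upwards [hS'] with ω h2
    have hsub : Summable fun k : {k : ℤ // k ≠ 0} => specWt h F' (ω + ((k : ℤ) : ℝ) / h) ^ 2 :=
      (hsummable_awsq ω h2).subtype _
    have hT := hT_nonneg ω
    have hTsum : ENNReal.ofReal (F ω *
          ∑' k : {k : ℤ // k ≠ 0}, specWt h F' (ω + ((k : ℤ) : ℝ) / h) ^ 2)
        = ∑' k : {k : ℤ // k ≠ 0}, φ k ω := by
      simp only [hφ]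
      rw [ENNReal.ofReal_mul (hFpos ω).le,
        ENNReal.ofReal_tsum_of_nonneg (fun k => sq_nonneg _) hsub, ← ENNReal.tsum_mul_left]
    simp only [hg1, heA]
    rw [mul_add, ENNReal.ofReal_add (mul_nonneg (hFpos ω).le (sq_nonneg _))
      (mul_nonneg (hFpos ω).le hT), hTsum]
  -- the pointwise inequality, a.e.
  have step7 : ∀ᵐ ω ∂(volume : Measure ℝ),
      ENNReal.ofReal (g2 ω) ≤ eA ω + ENNReal.ofReal (specPer h F ω - F ω) * eq0 ω := by
    filter_upwards [hS] with ω h1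
    have hle := hFleS ω h1
    have hkey := key_quadratic (F ω) (specPer h F ω) (specWt h F' ω) (hFpos ω) hle
    have hrw : eA ω + ENNReal.ofReal (specPer h F ω - F ω) * eq0 ω
        = ENNReal.ofReal (F ω * (1 - specWt h F' ω) ^ 2
            + (specPer h F ω - F ω) * specWt h F' ω ^ 2) := by
      simp only [heA, heq0]
      rw [ENNReal.ofReal_add (mul_nonneg (hFpos ω).le (sq_nonneg _))
        (mul_nonneg (by linarith) (sq_nonneg _)),
        ENNReal.ofReal_mul (by linarith : (0:ℝ) ≤ specPer h F ω - F ω)]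
    rw [hrw]
    exact ENNReal.ofReal_le_ofReal hkey
  -- assemble the lintegral inequality
  set L : ℝ≥0∞ := ∫⁻ ω, ENNReal.ofReal (g1 ω) with hL
  set R : ℝ≥0∞ := ∫⁻ ω, ENNReal.ofReal (g2 ω) with hR
  have hLsplit : L = (∫⁻ ω, eA ω) + ∫⁻ ω, ∑' k : {k : ℤ // k ≠ 0}, φ k ω := by
    rw [hL, lintegral_congr_ae step6]
    exact lintegral_add_left meA _
  have hBD : (∫⁻ ω, ∑' k : {k : ℤ // k ≠ 0}, φ k ω)
      = ∫⁻ ω, ENNReal.ofReal (specPer h F ω - F ω) * eq0 ω := by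
    rw [step2]
    rw [tsum_congr step1, step3]
    have : (fun ω => ∑' k : {k : ℤ // k ≠ 0}, ψ k ω)
        = fun ω => (∑' k : {k : ℤ // k ≠ 0}, ENNReal.ofReal (F (ω - ((k : ℤ) : ℝ) / h))) * eq0 ω :=
      funext step4
    rw [this]
    refine lintegral_congr_ae ?_
    filter_upwards [hS] with ω h1
    rw [step5 ω h1]
  have hRL : R ≤ L := by
    calc R ≤ ∫⁻ ω, (eA ω + ENNReal.ofReal (specPer h F ω - F ω) * eq0 ω) :=
          lintegral_mono_ae step7
      _ = (∫⁻ ω, eA ω) + ∫⁻ ω, ENNReal.ofReal (specPer h F ω - F ω) * eq0 ω :=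
          lintegral_add_left meA _
      _ = (∫⁻ ω, eA ω) + ∫⁻ ω, ∑' k : {k : ℤ // k ≠ 0}, φ k ω := by rw [hBD]
      _ = L := hLsplit.symm
  -- finiteness of L
  have hLne : L ≠ ∞ := by
    have hb : L ≤ ∫⁻ ω, ENNReal.ofReal (2 * F ω) := by
      rw [hL]
      refine lintegral_mono_ae ?_
      filter_upwards [hS'] with ω h2
      refine ENNReal.ofReal_le_ofReal ?_
      have hT1 := hT_le_one ω h2
      have hw0 : 0 ≤ specWt h F' ω := wt_nonneg ω
      have hw1 : specWt h F' ω ≤ 1 := by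
        have := haw_le_one ω h2 0
        simpa using this
      have hsq : (1 - specWt h F' ω) ^ 2 ≤ 1 := by nlinarith
      have hF0 := (hFpos ω).le
      simp only [hg1]
      nlinarith [hT_nonneg ω]
    have hfin : (∫⁻ ω, ENNReal.ofReal (2 * F ω)) < ∞ := by
      have hint : Integrable (fun ω => 2 * F ω) := hFint.const_mul 2
      have := hint.hasFiniteIntegral
      refine lt_of_le_of_lt (lintegral_mono fun ω => ?_) this
      exact Real.ofReal_le_enorm _
    exact (lt_of_le_of_lt hb hfin).ne
  -- convert to Bochner integrals
  have hnn1 : 0 ≤ᵐ[(volume : Measure ℝ)] g1 := by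
    refine Filter.Eventually.of_forall fun ω => ?_
    have := hT_nonneg ω
    simp only [hg1]
    exact mul_nonneg (hFpos ω).le (add_nonneg (sq_nonneg _) this)
  have hnn2 : 0 ≤ᵐ[(volume : Measure ℝ)] g2 := by
    filter_upwards [hS] with ω h1
    have hle := hFleS ω h1
    have hpos : 0 < specPer h F ω := (hFpos ω).trans_le hle
    simp only [hg2]
    exact div_nonneg (mul_nonneg (hFpos ω).le (by linarith)) hpos.le
  have e1 : (∫ ω, g1 ω) = L.toReal := by
    rw [hL]
    exact integral_eq_lintegral_of_nonneg_ae hnn1 mg1.aestronglyMeasurable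
  have e2 : (∫ ω, g2 ω) = R.toReal := by
    rw [hR]
    exact integral_eq_lintegral_of_nonneg_ae hnn2 mg2.aestronglyMeasurable
  show (∫ ω, g1 ω) ≥ ∫ ω, g2 ω
  rw [e1, e2]
  exact ENNReal.toReal_mono hLne hRL
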